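/- Under the adaptive-stencil mesh setup, assume u_{i+1} ≠ u_i, that both data values u_i and u_{i+1} are strictly positive, and let ε₀ ∈ [0,1] and ε₁ ≥ 0. Set u_min = (1 − ε₀)·min(u_i, u_{i+1}) and u_max = (1 + ε₁)·max(u_i, u_{i+1}), and define mℓ, mr and the bound sequences B_j^−, B_j^+ as in the positivity-preserving recursion (B_1^− = (−4(mr−1) − 1)·d_1, B_1^+ = (−4·mℓ + 1)·d_1, with the recursion branching on t_j ≤ 0 or t_j ≥ 1). If B_j^− ≤ λ̄_j ≤ B_j^+ for every 1 ≤ j ≤ n−1, then U_n(x) ≥ (1 − ε₀)·min(u_i, u_{i+1}) ≥ 0 for every x ∈ [x_i, x_{i+1}]; in particular the interpolant is nonnegative on the base interval. -/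

import Mathlib

/-- Divided differences over consecutive nodes: `divdiff x u k m = U[x_k, …, x_{k+m}]`. -/
noncomputable def divdiff (x u : ℕ → ℝ) : ℕ → ℕ → ℝ
  | k, 0 => u k
  | k, m + 1 => (divdiff x u (k + 1) m - divdiff x u k m) / (x (k + m + 1) - x k)

/-- `stMin e j = min{e_0, …, e_j}`. -/
def stMin (e : ℕ → ℕ) (j : ℕ) : ℕ := (Finset.range (j + 1)).inf' Finset.nonempty_range_add_one e

/-- `stMax e j = max{e_0, …, e_j}`. -/
def stMax (e : ℕ → ℕ) (j : ℕ) : ℕ := (Finset.range (j + 1)).sup' Finset.nonempty_range_add_one e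

/-- `U[V_j]`: the divided difference over the consecutive nodes of the stencil
`V_j = {e_0, …, e_{j+1}}`, from its leftmost node `x_j^l` to its rightmost node `x_j^r`. -/
noncomputable def UV (x u : ℕ → ℝ) (e : ℕ → ℕ) (j : ℕ) : ℝ :=
  divdiff x u (stMin e (j + 1)) (stMax e (j + 1) - stMin e (j + 1))

/-- The Newton interpolant of degree `n` on the adaptive stencil:
`U_n(y) = u_i + Σ_{j=0}^{n−1} U[V_j] · Π_{k=0}^{j} (y − x_{e_k})`. -/
noncomputable def Un (x u : ℕ → ℝ) (e : ℕ → ℕ) (i n : ℕ) (y : ℝ) : ℝ :=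
  u i + ∑ j ∈ Finset.range n, UV x u e j * ∏ k ∈ Finset.range (j + 1), (y - x (e k))

/-- Normalized stencil width `d_j = (x_j^r − x_j^l)/(x_{i+1} − x_i)`. -/
noncomputable def dN (x : ℕ → ℝ) (e : ℕ → ℕ) (i j : ℕ) : ℝ :=
  (x (stMax e (j + 1)) - x (stMin e (j + 1))) / (x (i + 1) - x i)

/-- Normalized position `t_j = (x_{e_j} − x_i)/(x_{i+1} − x_i)` of the added stencil point. -/
noncomputable def tN (x : ℕ → ℝ) (e : ℕ → ℕ) (i j : ℕ) : ℝ :=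
  (x (e j) - x i) / (x (i + 1) - x i)

/-- Scaled divided-difference ratio
`λ̄_j = (U[V_j]/U[x_i, x_{i+1}]) · Π_{k=1}^{j} (x_k^r − x_k^l)`. -/
noncomputable def lamBar (x u : ℕ → ℝ) (e : ℕ → ℕ) (i j : ℕ) : ℝ :=
  (UV x u e j / divdiff x u i 1) *
    ∏ k ∈ Finset.Icc 1 j, (x (stMax e (k + 1)) - x (stMin e (k + 1)))

/-- The expanded normalized Newton form
`S_n(s) = s + Σ_{j=1}^{n−1} (λ̄_j / (d_1⋯d_j)) · s·(s−1) · Π_{k=2}^{j} (s − t_k)`. -/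
noncomputable def Sn (n : ℕ) (d t lam : ℕ → ℝ) (s : ℝ) : ℝ :=
  s + ∑ j ∈ Finset.Icc 1 (n - 1),
    (lam j / ∏ k ∈ Finset.Icc 1 j, d k) * (s * (s - 1)) * ∏ k ∈ Finset.Icc 2 j, (s - t k)

lemma ppiAux_stMin_succ (e : ℕ → ℕ) (j : ℕ) : stMin e (j+1) = min (e (j+1)) (stMin e j) := by
  have h : stMin e (j+1) = (insert (j+1) (Finset.range (j+1))).inf'
      (Finset.insert_nonempty _ _) e := by
    simp only [stMin]; congr 1; exact Finset.range_add_one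
  rw [h, Finset.inf'_insert (H := Finset.nonempty_range_add_one)]; rfl

lemma ppiAux_stMax_succ (e : ℕ → ℕ) (j : ℕ) : stMax e (j+1) = max (e (j+1)) (stMax e j) := by
  have h : stMax e (j+1) = (insert (j+1) (Finset.range (j+1))).sup'
      (Finset.insert_nonempty _ _) e := by
    simp only [stMax]; congr 1; exact Finset.range_add_one
  rw [h, Finset.sup'_insert (H := Finset.nonempty_range_add_one)]; rfl

lemma ppiAux_stMin_le (e : ℕ → ℕ) {k j : ℕ} (h : k ≤ j) : stMin e j ≤ e k :=
  Finset.inf'_le _ (Finset.mem_range.2 (Nat.lt_succ_of_le h))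

lemma ppiAux_le_stMax (e : ℕ → ℕ) {k j : ℕ} (h : k ≤ j) : e k ≤ stMax e j :=
  Finset.le_sup' _ (Finset.mem_range.2 (Nat.lt_succ_of_le h))

lemma ppiAux_stMax_le (e : ℕ → ℕ) {j m : ℕ} (h : ∀ k, k ≤ j → e k ≤ m) : stMax e j ≤ m :=
  Finset.sup'_le _ _ fun k hk => h k (Nat.lt_succ_iff.1 (Finset.mem_range.1 hk))

lemma ppiAux_stMin_zero (e : ℕ → ℕ) : stMin e 0 = e 0 := by simp [stMin]
lemma ppiAux_stMax_zero (e : ℕ → ℕ) : stMax e 0 = e 0 := by simp [stMax]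

lemma ppiAux_x_mono {N : ℕ} {x : ℕ → ℝ} (hx : ∀ k, k < N → x k < x (k + 1)) :
    ∀ a b, a ≤ b → b ≤ N → x a ≤ x b := by
  intro a b hab hbN
  induction b with
  | zero => simp_all
  | succ b ih =>
    rcases Nat.eq_or_lt_of_le hab with h | h
    · simp [h]
    · exact (ih (by omega) (by omega)).trans (le_of_lt (hx b (by omega)))

lemma ppiAux_x_strict {N : ℕ} {x : ℕ → ℝ} (hx : ∀ k, k < N → x k < x (k + 1)) :
    ∀ a b, a < b → b ≤ N → x a < x b := by
  intro a b hab hbN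
  rcases Nat.exists_eq_add_of_lt hab with ⟨c, rfl⟩
  calc x a ≤ x (a + c) := ppiAux_x_mono hx a (a+c) (by omega) (by omega)
  _ < x (a + c + 1) := hx _ (by omega)

lemma ppiAux_key1 (bm bp w s t : ℝ) (h1 : bm ≤ w) (h2 : w ≤ bp) (h3 : bm ≤ 0) (h4 : 0 ≤ bp)
    (hs0 : 0 ≤ s) (hs1 : s ≤ 1) (ht : t ≤ 0) :
    bm * (1 - t) ≤ (s - t) * w ∧ (s - t) * w ≤ bp * (1 - t) := by
  rcases le_or_gt 0 w with hw | hw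
  · constructor <;> nlinarith
  · constructor <;> nlinarith

lemma ppiAux_key2 (bm bp w s t : ℝ) (h1 : bm ≤ w) (h2 : w ≤ bp) (h3 : bm ≤ 0) (h4 : 0 ≤ bp)
    (hs0 : 0 ≤ s) (hs1 : s ≤ 1) (ht : 1 ≤ t) :
    bp * (-t) ≤ (s - t) * w ∧ (s - t) * w ≤ bm * (-t) := by
  rcases le_or_gt 0 w with hw | hw
  · constructor <;> nlinarith
  · constructor <;> nlinarith

set_option maxHeartbeats 1000000 in
/-- Positivity of the PPI interpolant: with strictly positive data values, bounds
`u_min = (1 − ε₀)·min(u_i, u_{i+1})`, `u_max = (1 + ε₁)·max(u_i, u_{i+1})` with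
`ε₀ ∈ [0,1]`, `ε₁ ≥ 0`, and the PPI bound recursion satisfied, the interpolant satisfies
`U_n(x) ≥ (1 − ε₀)·min(u_i, u_{i+1}) ≥ 0` on the base interval. -/
theorem ppi_interpolant_nonneg
    (N n i : ℕ) (hn : 2 ≤ n) (hiN : i + 1 ≤ N)
    (x u : ℕ → ℝ)
    (hx : ∀ k, k < N → x k < x (k + 1))
    (e : ℕ → ℕ)
    (he0 : e 0 = i) (he1 : e 1 = i + 1)
    (heN : ∀ j, j ≤ n → e j ≤ N)
    (heStep : ∀ j, 2 ≤ j → j ≤ n →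
      e j + 1 = stMin e (j - 1) ∨ e j = stMax e (j - 1) + 1)
    (hu : u (i + 1) ≠ u i)
    (hui : 0 < u i) (hui1 : 0 < u (i + 1))
    (eps0 eps1 : ℝ) (heps0 : 0 ≤ eps0) (heps0' : eps0 ≤ 1) (heps1 : 0 ≤ eps1)
    (umin umax ml mr : ℝ)
    (humin : umin = (1 - eps0) * min (u i) (u (i + 1)))
    (humax : umax = (1 + eps1) * max (u i) (u (i + 1)))
    (hm₁ : u i < u (i + 1) →
      ml = min 0 ((umin - u i) / (u (i + 1) - u i)) ∧
      mr = max 1 ((umax - u i) / (u (i + 1) - u i)))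
    (hm₂ : u (i + 1) < u i →
      ml = min 0 ((umax - u i) / (u (i + 1) - u i)) ∧
      mr = max 1 ((umin - u i) / (u (i + 1) - u i)))
    (Bm Bp : ℕ → ℝ)
    (hBm1 : Bm 1 = (-4 * (mr - 1) - 1) * dN x e i 1)
    (hBp1 : Bp 1 = (-4 * ml + 1) * dN x e i 1)
    (hBrec : ∀ j, 2 ≤ j → j ≤ n - 1 →
      (tN x e i j ≤ 0 →
        Bm j = (Bm (j - 1) - lamBar x u e i (j - 1)) * dN x e i j / (1 - tN x e i j) ∧
        Bp j = (Bp (j - 1) - lamBar x u e i (j - 1)) * dN x e i j / (1 - tN x e i j)) ∧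
      (1 ≤ tN x e i j →
        Bm j = (Bp (j - 1) - lamBar x u e i (j - 1)) * dN x e i j / (-tN x e i j) ∧
        Bp j = (Bm (j - 1) - lamBar x u e i (j - 1)) * dN x e i j / (-tN x e i j)))
    (hlam : ∀ j, 1 ≤ j → j ≤ n - 1 →
      Bm j ≤ lamBar x u e i j ∧ lamBar x u e i j ≤ Bp j)
    :
    ∀ y ∈ Set.Icc (x i) (x (i + 1)),
      (1 - eps0) * min (u i) (u (i + 1)) ≤ Un x u e i n y ∧
        (0 : ℝ) ≤ (1 - eps0) * min (u i) (u (i + 1)) := by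
  intro y hy
  -- basic setup
  have hΔ : (0:ℝ) < x (i+1) - x i := sub_pos.2 (hx i (by omega))
  have hΔ0 : x (i+1) - x i ≠ 0 := ne_of_gt hΔ
  set Δ : ℝ := x (i+1) - x i with hΔdef
  -- stencil structure
  have hmin1 : stMin e 1 = i := by
    rw [show (1:ℕ) = 0 + 1 from rfl, ppiAux_stMin_succ, ppiAux_stMin_zero, he0, he1]; omega
  have hmax1 : stMax e 1 = i + 1 := by
    rw [show (1:ℕ) = 0 + 1 from rfl, ppiAux_stMax_succ, ppiAux_stMax_zero, he0, he1]; omega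
  have hcons : ∀ j, 1 ≤ j → j ≤ n → stMax e j = stMin e j + j := by
    intro j h1 h2
    induction j with
    | zero => omega
    | succ j ih =>
      rcases Nat.eq_or_lt_of_le h1 with h | h
      · rw [← h]; omega
      · have hj1 : 1 ≤ j := by omega
        have ihj := ih hj1 (by omega)
        have hstep := heStep (j+1) (by omega) h2
        simp only [Nat.add_sub_cancel] at hstep
        have hms : stMin e j ≤ stMax e j :=
          (ppiAux_stMin_le e (Nat.zero_le j)).trans (ppiAux_le_stMax e (Nat.zero_le j))
        rw [ppiAux_stMin_succ, ppiAux_stMax_succ]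
        omega
  have hmaxN : ∀ j, j ≤ n → stMax e j ≤ N :=
    fun j hj => ppiAux_stMax_le e (fun k hk => heN k (hk.trans hj))
  have hh_pos : ∀ k, 1 ≤ k → k ≤ n - 1 → 0 < x (stMax e (k+1)) - x (stMin e (k+1)) := by
    intro k h1 h2
    have hc := hcons (k+1) (by omega) (by omega)
    exact sub_pos.2 (ppiAux_x_strict hx _ _ (by omega) (hmaxN (k+1) (by omega)))
  have ht_out0 : ∀ j, 2 ≤ j → j ≤ n - 1 → tN x e i j ≤ 0 ∨ 1 ≤ tN x e i j := by
    intro j h2 h3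
    rcases heStep j h2 (by omega) with h' | h'
    · left
      have hlt : e j < i := by
        have := ppiAux_stMin_le e (Nat.zero_le (j-1)); rw [he0] at this; omega
      have hxej : x (e j) ≤ x i := ppiAux_x_mono hx _ _ (by omega) (by omega)
      exact div_nonpos_of_nonpos_of_nonneg (by linarith) (le_of_lt hΔ)
    · right
      have hgt : i + 1 < e j := by
        have := ppiAux_le_stMax e (show 1 ≤ j - 1 by omega); rw [he1] at this; omega
      have hxej : x (i+1) ≤ x (e j) := ppiAux_x_mono hx _ _ (by omega) (heN j (by omega))
      rw [tN, le_div_iff₀ hΔ]; linarith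
  -- first divided difference
  have hD : divdiff x u i 1 = (u (i+1) - u i) / Δ := by
    show divdiff x u i (0+1) = _
    rw [divdiff]
    simp [divdiff]
    rfl
  have hD0 : divdiff x u i 1 ≠ 0 := by
    rw [hD]; exact div_ne_zero (sub_ne_zero.2 hu) hΔ0
  have hUV0 : UV x u e 0 = divdiff x u i 1 := by
    rw [UV, hmin1, hmax1]; norm_num
  -- normalized position
  set s : ℝ := (y - x i) / Δ with hsdef
  have hs0 : 0 ≤ s := div_nonneg (by linarith [hy.1]) (le_of_lt hΔ)
  have hs1 : s ≤ 1 := by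
    rw [hsdef, div_le_one hΔ]; linarith [hy.2]
  -- abbreviations
  set t : ℕ → ℝ := fun k => tN x e i k with htdef
  set d : ℕ → ℝ := fun k => dN x e i k with hddef
  set lam : ℕ → ℝ := fun k => lamBar x u e i k with hlamdef
  set W : ℕ → ℝ := fun j => ∑ m ∈ Finset.Icc j (n-1),
      lam m * ∏ k ∈ Finset.Icc (j+1) m, ((s - t k) / d k) with hWdef
  -- restated facts in terms of the abbreviations
  have hd_pos : ∀ k, 1 ≤ k → k ≤ n - 1 → 0 < d k := by
    intro k h1 h2
    exact div_pos (hh_pos k h1 h2) hΔ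
  have hdne : ∀ k, 1 ≤ k → k ≤ n - 1 → d k ≠ 0 := fun k h1 h2 => ne_of_gt (hd_pos k h1 h2)
  have ht_out : ∀ j, 2 ≤ j → j ≤ n - 1 → t j ≤ 0 ∨ 1 ≤ t j := ht_out0
  have ht0 : t 0 = 0 := by show tN x e i 0 = 0; simp [tN, he0]
  have ht1 : t 1 = 1 := by show tN x e i 1 = 1; rw [tN, he1]; exact div_self hΔ0
  have hxe : ∀ k, y - x (e k) = Δ * (s - t k) := by
    intro k
    show y - x (e k) = Δ * ((y - x i)/Δ - tN x e i k)
    rw [tN, ← hΔdef]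
    field_simp
    ring
  have hhd : ∀ k, x (stMax e (k+1)) - x (stMin e (k+1)) = Δ * d k := by
    intro k
    show _ = Δ * ((x (stMax e (k+1)) - x (stMin e (k+1))) / Δ)
    rw [mul_div_cancel₀ _ hΔ0]
  have hlamUV : ∀ m, lam m = (UV x u e m / divdiff x u i 1)
      * ∏ k ∈ Finset.Icc 1 m, (x (stMax e (k+1)) - x (stMin e (k+1))) := by
    intro m
    show lamBar x u e i m = _
    rw [lamBar]
  have hBm1' : Bm 1 = (-4 * (mr - 1) - 1) * d 1 := hBm1
  have hBp1' : Bp 1 = (-4 * ml + 1) * d 1 := hBp1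
  have hBrec' : ∀ j, 2 ≤ j → j ≤ n - 1 →
      (t j ≤ 0 →
        Bm j = (Bm (j - 1) - lam (j - 1)) * d j / (1 - t j) ∧
        Bp j = (Bp (j - 1) - lam (j - 1)) * d j / (1 - t j)) ∧
      (1 ≤ t j →
        Bm j = (Bp (j - 1) - lam (j - 1)) * d j / (-t j) ∧
        Bp j = (Bm (j - 1) - lam (j - 1)) * d j / (-t j)) := hBrec
  have hlam' : ∀ j, 1 ≤ j → j ≤ n - 1 → Bm j ≤ lam j ∧ lam j ≤ Bp j := hlam
  -- recurrence for W (needs definitional unfolding, so done before clear_value)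
  have hWtop : W (n-1) = lam (n-1) := by
    rw [hWdef]
    simp
  have hW1eq : W 1 = ∑ m ∈ Finset.Icc 1 (n-1),
      lam m * ∏ k ∈ Finset.Icc 2 m, ((s - t k) / d k) := rfl
  have hWrec : ∀ j, 1 ≤ j → j + 1 ≤ n - 1 →
      W j = lam j + ((s - t (j+1)) / d (j+1)) * W (j+1) := by
    intro j h1 h2
    have hsplit : Finset.Icc j (n-1) = insert j (Finset.Icc (j+1) (n-1)) := by
      ext a; simp only [Finset.mem_Icc, Finset.mem_insert]; omega
    have hnot : j ∉ Finset.Icc (j+1) (n-1) := by simp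
    show (∑ m ∈ Finset.Icc j (n-1), lam m * ∏ k ∈ Finset.Icc (j+1) m, ((s - t k) / d k))
        = lam j + ((s - t (j+1)) / d (j+1)) *
          ∑ m ∈ Finset.Icc (j+1) (n-1), lam m * ∏ k ∈ Finset.Icc (j+1+1) m, ((s - t k) / d k)
    rw [hsplit, Finset.sum_insert hnot, Finset.Icc_eq_empty (by omega), Finset.prod_empty,
      mul_one, Finset.mul_sum]
    congr 1
    apply Finset.sum_congr rfl
    intro m hm
    obtain ⟨hm1, hm2⟩ := Finset.mem_Icc.1 hm
    have hins : Finset.Icc (j+1) m = insert (j+1) (Finset.Icc (j+2) m) := by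
      ext a; simp only [Finset.mem_Icc, Finset.mem_insert]; omega
    rw [hins, Finset.prod_insert (by simp)]
    ring
  -- abstract away all local definitions
  clear_value Δ s t d lam W
  -- the main identity
  have hiden : Un x u e i n y = u i + (u (i+1) - u i) * (s + s * (s-1) * (W 1 / d 1)) := by
    have hsplit : Finset.range n = insert 0 (Finset.Icc 1 (n-1)) := by
      ext a; simp only [Finset.mem_range, Finset.mem_insert, Finset.mem_Icc]; omega
    have h00 : UV x u e 0 * ∏ k ∈ Finset.range (0+1), (y - x (e k)) = (u (i+1) - u i) * s := by
      rw [hUV0, hD, Finset.prod_range_one, hxe 0, ht0]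
      field_simp
      ring
    have hterm : ∀ m ∈ Finset.Icc 1 (n-1),
        UV x u e m * ∏ k ∈ Finset.range (m+1), (y - x (e k))
        = (u (i+1) - u i) * (s * (s-1)) * (lam m * ∏ k ∈ Finset.Icc 2 m, (s - t k))
            / (∏ k ∈ Finset.Icc 1 m, d k) := by
      intro m hm
      obtain ⟨hm1, hm2⟩ := Finset.mem_Icc.1 hm
      have hprod1 : ∏ k ∈ Finset.range (m+1), (y - x (e k))
          = Δ^(m+1) * ∏ k ∈ Finset.range (m+1), (s - t k) := by
        calc ∏ k ∈ Finset.range (m+1), (y - x (e k))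
            = ∏ k ∈ Finset.range (m+1), (Δ * (s - t k)) :=
              Finset.prod_congr rfl (fun k _ => hxe k)
          _ = Δ^(m+1) * ∏ k ∈ Finset.range (m+1), (s - t k) := by
              rw [Finset.prod_mul_distrib, Finset.prod_const, Finset.card_range]
      have hsplit2 : Finset.range (m+1) = insert 0 (insert 1 (Finset.Icc 2 m)) := by
        ext a
        simp only [Finset.mem_range, Finset.mem_insert, Finset.mem_Icc]
        omega
      have hprod2 : ∏ k ∈ Finset.range (m+1), (s - t k)
          = s * (s - 1) * ∏ k ∈ Finset.Icc 2 m, (s - t k) := by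
        rw [hsplit2, Finset.prod_insert (by simp), Finset.prod_insert (by simp), ht0, ht1]
        ring
      have hprodd : ∏ k ∈ Finset.Icc 1 m, (x (stMax e (k+1)) - x (stMin e (k+1)))
          = Δ^m * ∏ k ∈ Finset.Icc 1 m, d k := by
        calc ∏ k ∈ Finset.Icc 1 m, (x (stMax e (k+1)) - x (stMin e (k+1)))
            = ∏ k ∈ Finset.Icc 1 m, (Δ * d k) :=
              Finset.prod_congr rfl (fun k _ => hhd k)
          _ = Δ^m * ∏ k ∈ Finset.Icc 1 m, d k := by
              rw [Finset.prod_mul_distrib, Finset.prod_const, Nat.card_Icc]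
              norm_num
      have hdprod_ne : (∏ k ∈ Finset.Icc 1 m, d k) ≠ 0 := by
        apply Finset.prod_ne_zero_iff.2
        intro k hk
        obtain ⟨hk1, hk2⟩ := Finset.mem_Icc.1 hk
        exact hdne k hk1 (by omega)
      have hlb := hlamUV m
      rw [hprodd] at hlb
      have hpow : (Δ:ℝ)^m ≠ 0 := pow_ne_zero _ hΔ0
      have hUVm : UV x u e m = lam m * divdiff x u i 1 / (Δ^m * ∏ k ∈ Finset.Icc 1 m, d k) := by
        rw [hlb]
        field_simp
      rw [hprod1, hprod2, hUVm, hD]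
      field_simp
      ring
    have hrhs : ∑ m ∈ Finset.Icc 1 (n-1),
        (u (i+1) - u i) * (s * (s-1)) * (lam m * ∏ k ∈ Finset.Icc 2 m, (s - t k))
          / (∏ k ∈ Finset.Icc 1 m, d k)
        = (u (i+1) - u i) * (s * (s-1)) * (W 1 / d 1) := by
      have hd1ne : d 1 ≠ 0 := hdne 1 le_rfl (by omega)
      rw [hW1eq, Finset.sum_div, Finset.mul_sum]
      apply Finset.sum_congr rfl
      intro m hm
      obtain ⟨hm1, hm2⟩ := Finset.mem_Icc.1 hm
      have hins : Finset.Icc 1 m = insert 1 (Finset.Icc 2 m) := by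
        ext a; simp only [Finset.mem_Icc, Finset.mem_insert]; omega
      have h2ne : (∏ k ∈ Finset.Icc 2 m, d k) ≠ 0 := by
        apply Finset.prod_ne_zero_iff.2
        intro k hk
        obtain ⟨hk1, hk2⟩ := Finset.mem_Icc.1 hk
        exact hdne k (by omega) (by omega)
      rw [hins, Finset.prod_insert (by simp), Finset.prod_div_distrib]
      field_simp
      try ring
      try exact Or.inl trivial
    rw [Un, hsplit, Finset.sum_insert (by simp), h00, Finset.sum_congr rfl hterm, hrhs]
    ring
  -- ml/mr basic bounds
  have hu' : u i < u (i + 1) ∨ u (i + 1) < u i := by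
    rcases lt_or_gt_of_ne hu with h | h
    · right; exact h
    · left; exact h
  have hml : ml ≤ 0 ∧ 1 ≤ mr := by
    rcases hu' with h | h
    · obtain ⟨h1, h2⟩ := hm₁ h
      exact ⟨h1 ▸ min_le_left _ _, h2 ▸ le_max_left _ _⟩
    · obtain ⟨h1, h2⟩ := hm₂ h
      exact ⟨h1 ▸ min_le_left _ _, h2 ▸ le_max_left _ _⟩
  -- sign invariant for the bounds
  have hB0 : ∀ j, 1 ≤ j → j ≤ n - 1 → Bm j ≤ 0 ∧ 0 ≤ Bp j := by
    intro j h1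
    induction j, h1 using Nat.le_induction with
    | base =>
      intro h2
      have hd1 : 0 < d 1 := hd_pos 1 le_rfl (by omega)
      constructor
      · rw [hBm1']
        apply mul_nonpos_of_nonpos_of_nonneg (by linarith [hml.2]) (le_of_lt hd1)
      · rw [hBp1']
        apply mul_nonneg (by linarith [hml.1]) (le_of_lt hd1)
    | succ j hj ih =>
      intro h2
      have hprev := ih (by omega)
      have hlamj := hlam' j hj (by omega)
      have hrec := hBrec' (j+1) (by omega) h2
      simp only [Nat.add_sub_cancel] at hrec
      have hdj : 0 < d (j+1) := hd_pos (j+1) (by omega) h2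
      rcases ht_out (j+1) (by omega) h2 with htc | htc
      · obtain ⟨hbm, hbp⟩ := hrec.1 htc
        have h1t : (0:ℝ) < 1 - t (j+1) := by linarith
        constructor
        · rw [hbm]
          apply div_nonpos_of_nonpos_of_nonneg _ (le_of_lt h1t)
          exact mul_nonpos_of_nonpos_of_nonneg (by linarith [hlamj.1]) (le_of_lt hdj)
        · rw [hbp]
          apply div_nonneg _ (le_of_lt h1t)
          exact mul_nonneg (by linarith [hlamj.2]) (le_of_lt hdj)
      · obtain ⟨hbm, hbp⟩ := hrec.2 htc
        have h1t : -t (j+1) < 0 := by linarith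
        constructor
        · rw [hbm]
          apply div_nonpos_of_nonneg_of_nonpos _ (le_of_lt h1t)
          exact mul_nonneg (by linarith [hlamj.2]) (le_of_lt hdj)
        · rw [hbp]
          exact div_nonneg_of_nonpos
            (mul_nonpos_of_nonpos_of_nonneg (by linarith [hlamj.1]) (le_of_lt hdj))
            (le_of_lt h1t)
  -- the downward induction bound
  have hWbound : ∀ m : ℕ, ∀ j, 1 ≤ j → j + m = n - 1 → Bm j ≤ W j ∧ W j ≤ Bp j := by
    intro m
    induction m with
    | zero =>
      intro j h1 h2
      have hj : j = n - 1 := by omega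
      subst hj
      rw [hWtop]
      exact hlam' (n-1) h1 le_rfl
    | succ m ih =>
      intro j h1 h2
      have hIH := ih (j+1) (by omega) (by omega)
      have hrecW := hWrec j h1 (by omega)
      have hrec := hBrec' (j+1) (by omega) (by omega)
      simp only [Nat.add_sub_cancel] at hrec
      have hdj : 0 < d (j+1) := hd_pos (j+1) (by omega) (by omega)
      have hB0j := hB0 (j+1) (by omega) (by omega)
      rcases ht_out (j+1) (by omega) (by omega) with htc | htc
      · obtain ⟨hbm, hbp⟩ := hrec.1 htc
        have h1t : (0:ℝ) < 1 - t (j+1) := by linarith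
        have hkey := ppiAux_key1 (Bm (j+1)) (Bp (j+1)) (W (j+1)) s (t (j+1))
          hIH.1 hIH.2 hB0j.1 hB0j.2 hs0 hs1 htc
        have e1 : Bm (j+1) * (1 - t (j+1)) = (Bm j - lam j) * d (j+1) := by
          rw [hbm]; field_simp
        have e2 : Bp (j+1) * (1 - t (j+1)) = (Bp j - lam j) * d (j+1) := by
          rw [hbp]; field_simp
        constructor
        · rw [hrecW]
          have h5 : (Bm j - lam j) * d (j+1) ≤ (s - t (j+1)) * W (j+1) := by
            rw [← e1]; exact hkey.1
          have h6 : Bm j - lam j ≤ ((s - t (j+1)) / d (j+1)) * W (j+1) := by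
            rw [div_mul_eq_mul_div, le_div_iff₀ hdj]; linarith
          linarith
        · rw [hrecW]
          have h5 : (s - t (j+1)) * W (j+1) ≤ (Bp j - lam j) * d (j+1) := by
            rw [← e2]; exact hkey.2
          have h6 : ((s - t (j+1)) / d (j+1)) * W (j+1) ≤ Bp j - lam j := by
            rw [div_mul_eq_mul_div, div_le_iff₀ hdj]; linarith
          linarith
      · obtain ⟨hbm, hbp⟩ := hrec.2 htc
        have h1t : -t (j+1) < 0 := by linarith
        have hkey := ppiAux_key2 (Bm (j+1)) (Bp (j+1)) (W (j+1)) s (t (j+1))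
          hIH.1 hIH.2 hB0j.1 hB0j.2 hs0 hs1 htc
        have e1 : Bm (j+1) * (-t (j+1)) = (Bp j - lam j) * d (j+1) := by
          rw [hbm]; field_simp
        have e2 : Bp (j+1) * (-t (j+1)) = (Bm j - lam j) * d (j+1) := by
          rw [hbp]; field_simp
        constructor
        · rw [hrecW]
          have h5 : (Bm j - lam j) * d (j+1) ≤ (s - t (j+1)) * W (j+1) := by
            rw [← e2]; exact hkey.1
          have h6 : Bm j - lam j ≤ ((s - t (j+1)) / d (j+1)) * W (j+1) := by
            rw [div_mul_eq_mul_div, le_div_iff₀ hdj]; linarith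
          linarith
        · rw [hrecW]
          have h5 : (s - t (j+1)) * W (j+1) ≤ (Bp j - lam j) * d (j+1) := by
            rw [← e1]; exact hkey.2
          have h6 : ((s - t (j+1)) / d (j+1)) * W (j+1) ≤ Bp j - lam j := by
            rw [div_mul_eq_mul_div, div_le_iff₀ hdj]; linarith
          linarith
  -- bounds at level 1
  have hW1 := hWbound (n - 1 - 1) 1 le_rfl (by omega)
  have hd1 : 0 < d 1 := hd_pos 1 le_rfl (by omega)
  set q : ℝ := W 1 / d 1 with hqdef
  have hq1 : -4 * (mr - 1) - 1 ≤ q := by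
    rw [hqdef, le_div_iff₀ hd1]
    have := hW1.1; rw [hBm1'] at this; exact this
  have hq2 : q ≤ -4 * ml + 1 := by
    rw [hqdef, div_le_iff₀ hd1]
    have := hW1.2; rw [hBp1'] at this; exact this
  clear_value q
  -- S bounds
  have hss : s * (s - 1) ≤ 0 := mul_nonpos_of_nonneg_of_nonpos hs0 (by linarith)
  set S : ℝ := s + s * (s - 1) * q with hSdef
  clear_value S
  have hSl : ml ≤ S := by
    rw [hSdef]
    have h6 : s * (s-1) * (-4 * ml + 1) ≤ s * (s-1) * q :=
      mul_le_mul_of_nonpos_left hq2 hss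
    nlinarith [mul_nonneg (neg_nonneg.2 hml.1) (sq_nonneg (2*s - 1))]
  have hSr : S ≤ mr := by
    rw [hSdef]
    have h6 : s * (s-1) * q ≤ s * (s-1) * (-4 * (mr - 1) - 1) :=
      mul_le_mul_of_nonpos_left hq1 hss
    nlinarith [mul_nonneg (by linarith [hml.2] : (0:ℝ) ≤ mr - 1) (sq_nonneg (2*s - 1)),
      sq_nonneg (1 - s)]
  -- conclusion
  have humin_le : (1 - eps0) * min (u i) (u (i + 1)) ≤ Un x u e i n y := by
    rw [hiden]
    rcases hu' with h | h
    · have hmm := (hm₁ h).1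
      have hminv : min (u i) (u (i+1)) = u i := min_eq_left (le_of_lt h)
      have hr : (umin - u i) / (u (i+1) - u i) ≤ 0 := by
        apply div_nonpos_of_nonpos_of_nonneg _ (by linarith)
        rw [humin, hminv]; nlinarith
      have hmleq : ml = (umin - u i) / (u (i+1) - u i) := by
        rw [hmm, min_eq_right hr]
      have hSml : (umin - u i) / (u (i+1) - u i) ≤ S := hmleq ▸ hSl
      have h7 : umin - u i ≤ S * (u (i+1) - u i) :=
        (div_le_iff₀ (by linarith : (0:ℝ) < u (i+1) - u i)).1 hSml
      have humin' : umin = (1 - eps0) * u i := by rw [humin, hminv]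
      rw [hminv]
      nlinarith [h7]
    · have hmm := (hm₂ h).2
      have hminv : min (u i) (u (i+1)) = u (i+1) := min_eq_right (le_of_lt h)
      have huneg : u (i+1) - u i < 0 := by linarith
      have hr : 1 ≤ (umin - u i) / (u (i+1) - u i) := by
        rw [le_div_iff_of_neg huneg]
        rw [humin, hminv]; nlinarith
      have hmreq : mr = (umin - u i) / (u (i+1) - u i) := by
        rw [hmm, max_eq_right hr]
      have hSmr : S ≤ (umin - u i) / (u (i+1) - u i) := hmreq ▸ hSr
      have h7 : umin - u i ≤ S * (u (i+1) - u i) :=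
        (le_div_iff_of_neg huneg).1 hSmr
      have humin' : umin = (1 - eps0) * u (i+1) := by rw [humin, hminv]
      rw [hminv]
      nlinarith [h7]
  refine ⟨humin_le, ?_⟩
  have : 0 < min (u i) (u (i+1)) := lt_min hui hui1
  apply mul_nonneg (by linarith) (le_of_lt this)
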